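/- For n ≥ 3 there are uncountably many equivalence classes of partial isometries in T_3(ℂ) of the form [[0, v_1, v_2],[0, v_4, v_3],[0,0,0]] where the 2×2 matrix [[v_1,v_2],[v_4,v_3]] is unitary, under the equivalence v ~ w iff w = z v y for unitaries z, y in T_3(ℂ). More precisely: there exists an injection from ℝ (or from the unit circle modulo a countable relation) into the set of these equivalence classes. -/

import Mathlib

open Matrix

/-- The partial isometry in T₃(ℂ) with first column zero, last row zero,
and upper-right 2×2 corner the unitary U. -/
def V7 (U : Matrix (Fin 2) (Fin 2) ℂ) : Matrix (Fin 3) (Fin 3) ℂ :=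
  !![0, U 0 0, U 0 1;
     0, U 1 0, U 1 1;
     0, 0, 0]

noncomputable def th7 (s : ℝ) : ℝ := Real.arctan s / 2 + Real.pi / 4

lemma th7_mem (s : ℝ) : th7 s ∈ Set.Ioo 0 (Real.pi / 2) := by
  have h := Real.arctan_mem_Ioo s
  unfold th7
  constructor <;> nlinarith [h.1, h.2, Real.pi_pos]

lemma th7_inj : Function.Injective th7 := by
  intro s t h
  unfold th7 at h
  exact Real.arctan_injective (by linarith)

lemma abs_one_of_conj_mul (a : ℂ) (h : (starRingEnd ℂ) a * a = 1) : ‖a‖ = 1 := by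
  have h2 : ‖(starRingEnd ℂ) a * a‖ = 1 := by rw [h]; simp
  rw [norm_mul, Complex.norm_conj] at h2
  nlinarith [norm_nonneg a]

/-- There are uncountably many equivalence classes of such partial isometries
under two-sided multiplication by (upper triangular) unitaries of T₃(ℂ):
there is an injection of ℝ into the classes. -/
theorem stmt7 :
    ∃ f : ℝ → Matrix (Fin 2) (Fin 2) ℂ,
      (∀ s, f s ∈ Matrix.unitaryGroup (Fin 2) ℂ) ∧
      ∀ s t : ℝ, s ≠ t →
        ¬ ∃ z y : Matrix (Fin 3) (Fin 3) ℂ,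
            z ∈ Matrix.unitaryGroup (Fin 3) ℂ ∧ y ∈ Matrix.unitaryGroup (Fin 3) ℂ ∧
            (∀ i j : Fin 3, j < i → z i j = 0) ∧
            (∀ i j : Fin 3, j < i → y i j = 0) ∧
            z * V7 (f s) * y = V7 (f t) := by
  refine ⟨fun s => !![(Real.cos (th7 s) : ℂ), -(Real.sin (th7 s));
      (Real.sin (th7 s)), (Real.cos (th7 s))], fun s => ?_, ?_⟩
  · constructor <;>
    · ext i j
      fin_cases i <;> fin_cases j <;>
        simp [Matrix.mul_apply, Fin.sum_univ_two, star_apply, conjTranspose_apply,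
          Matrix.one_apply, Complex.conj_ofReal, -Complex.ofReal_cos, -Complex.ofReal_sin] <;>
        first | ring1 | (norm_cast; nlinarith [Real.sin_sq_add_cos_sq (th7 s)])
  · rintro s t hst ⟨z, y, hzU, hyU, hz, hy, h⟩
    have hz10 : z 1 0 = 0 := hz 1 0 (by decide)
    have hz20 : z 2 0 = 0 := hz 2 0 (by decide)
    have hy10 : y 1 0 = 0 := hy 1 0 (by decide)
    have hy20 : y 2 0 = 0 := hy 2 0 (by decide)
    have hy21 : y 2 1 = 0 := hy 2 1 (by decide)
    have hzs : star z * z = 1 := hzU.1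
    have hys : star y * y = 1 := hyU.1
    -- |z 0 0| = 1
    have e00 : (starRingEnd ℂ) (z 0 0) * z 0 0 = 1 := by
      have h1 := congrArg (fun M => M 0 0) hzs
      simpa [Matrix.mul_apply, Fin.sum_univ_three, conjTranspose_apply,
        Matrix.one_apply, hz10, hz20] using h1
    have hz00 : z 0 0 ≠ 0 := by
      intro h0; rw [h0, mul_zero] at e00; exact one_ne_zero e00.symm
    -- z 0 1 = 0
    have e01 : z 0 1 = 0 := by
      have h1 := congrArg (fun M => M 0 1) hzs
      simp [Matrix.mul_apply, Fin.sum_univ_three, conjTranspose_apply,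
        Matrix.one_apply, hz10, hz20] at h1
      rcases h1 with h2 | h2
      · exact absurd (by simpa using congrArg (starRingEnd ℂ) h2) hz00
      · exact h2
    -- |y 0 0| = 1, y 0 1 = 0
    have f00 : (starRingEnd ℂ) (y 0 0) * y 0 0 = 1 := by
      have h1 := congrArg (fun M => M 0 0) hys
      simpa [Matrix.mul_apply, Fin.sum_univ_three, conjTranspose_apply,
        Matrix.one_apply, hy10, hy20] using h1
    have hy00 : y 0 0 ≠ 0 := by
      intro h0; rw [h0, mul_zero] at f00; exact one_ne_zero f00.symm
    have f01 : y 0 1 = 0 := by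
      have h1 := congrArg (fun M => M 0 1) hys
      simp [Matrix.mul_apply, Fin.sum_univ_three, conjTranspose_apply,
        Matrix.one_apply, hy10, hy20, hy21] at h1
      rcases h1 with h2 | h2
      · exact absurd (by simpa using congrArg (starRingEnd ℂ) h2) hy00
      · exact h2
    -- |y 1 1| = 1
    have f11 : (starRingEnd ℂ) (y 1 1) * y 1 1 = 1 := by
      have h1 := congrArg (fun M => M 1 1) hys
      simpa [Matrix.mul_apply, Fin.sum_univ_three, conjTranspose_apply,
        Matrix.one_apply, f01, hy21] using h1
    -- the (0,1) entry of the equation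
    have hE := congrArg (fun M => M 0 1) h
    simp [Matrix.mul_apply, Fin.sum_univ_three, V7, e01, f01, hy21, -Complex.ofReal_cos, -Complex.ofReal_sin] at hE
    -- hE : z 0 0 * ↑(Real.cos (th7 s)) * y 1 1 = ↑(Real.cos (th7 t))  (up to assoc)
    have habs := congrArg (fun x : ℂ => ‖x‖) hE
    simp only [norm_mul] at habs
    rw [abs_one_of_conj_mul _ e00, abs_one_of_conj_mul _ f11] at habs
    have hcs : Real.cos (th7 s) = Real.cos (th7 t) := by
      have hs := th7_mem s; have ht := th7_mem t
      have h1 : ‖((Real.cos (th7 s) : ℂ))‖ = Real.cos (th7 s) := by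
        rw [Complex.norm_real, Real.norm_eq_abs, abs_of_nonneg]
        exact Real.cos_nonneg_of_mem_Icc ⟨by linarith [hs.1, Real.pi_pos], le_of_lt hs.2⟩
      have h2 : ‖((Real.cos (th7 t) : ℂ))‖ = Real.cos (th7 t) := by
        rw [Complex.norm_real, Real.norm_eq_abs, abs_of_nonneg]
        exact Real.cos_nonneg_of_mem_Icc ⟨by linarith [ht.1, Real.pi_pos], le_of_lt ht.2⟩
      rw [h1, h2] at habs
      linarith [habs]
    have : th7 s = th7 t := by
      have hs := th7_mem s; have ht := th7_mem t
      have hpi := Real.pi_pos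
      exact Real.injOn_cos ⟨le_of_lt hs.1, by linarith [hs.2]⟩
        ⟨le_of_lt ht.1, by linarith [ht.2]⟩ hcs
    exact hst (th7_inj this)
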